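/- Let H be a connected finite simple graph and let G = H ∘ K₂ be the corona of H with K₂, with α = α(G). If α ≥ 3, then s_{α−3}·s_{α−1} ≤ s_{α−2}² and s_{α−2}·s_α ≤ s_{α−1}². -/

import Mathlib

open Finset
open scoped Classical

variable {V : Type*}

/-- `S` is an independent set in `G`: its vertices are pairwise non-adjacent. -/
def IsIndepSet (G : SimpleGraph V) (S : Finset V) : Prop :=
  ∀ ⦃u⦄, u ∈ S → ∀ ⦃v⦄, v ∈ S → ¬ G.Adj u v

/-- The neighborhood `N(S)`: all vertices having at least one neighbor in `S`. -/
noncomputable def neigh [Fintype V] (G : SimpleGraph V) (S : Finset V) : Finset V :=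
  Finset.univ.filter fun v => ∃ u ∈ S, G.Adj u v

/-- The independence number `α(G)`: the maximum size of an independent set. -/
noncomputable def indepNum [Fintype V] (G : SimpleGraph V) : ℕ :=
  (Finset.univ.filter fun S : Finset V => IsIndepSet G S).sup Finset.card

/-- `s_k`: the number of independent sets of size `k` in `G`. -/
noncomputable def indepCount [Fintype V] (G : SimpleGraph V) (k : ℕ) : ℕ :=
  (Finset.univ.filter fun S : Finset V => IsIndepSet G S ∧ S.card = k).card

/-- A maximal independent set (not properly contained in another independent set). -/
def IsMaximalIndepSet (G : SimpleGraph V) (S : Finset V) : Prop :=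
  IsIndepSet G S ∧ ∀ T : Finset V, IsIndepSet G T → S ⊆ T → S = T

/-- `G` is well-covered: all maximal independent sets have the same cardinality. -/
def IsWellCovered (G : SimpleGraph V) : Prop :=
  ∀ S T : Finset V, IsMaximalIndepSet G S → IsMaximalIndepSet G T → S.card = T.card

/-- `G` is 1-well-covered: it is well-covered, has at least two vertices, and
deleting any vertex leaves a well-covered graph. -/
def IsOneWellCovered [Fintype V] (G : SimpleGraph V) : Prop :=
  IsWellCovered G ∧ 2 ≤ Fintype.card V ∧
    ∀ v : V, IsWellCovered (G.induce ({v}ᶜ : Set V))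

/-- The corona `H ∘ K₂`: for each vertex `v` of `H`, two new vertices
(`(v, false)` and `(v, true)`) adjacent to each other and to `v` are added. -/
def corona2 (H : SimpleGraph V) : SimpleGraph (V ⊕ V × Bool) :=
  SimpleGraph.fromRel fun x y =>
    match x, y with
    | Sum.inl u, Sum.inl v => H.Adj u v
    | Sum.inl u, Sum.inr (v, _) => u = v
    | Sum.inr (u, _), Sum.inr (v, _) => u = v
    | _, _ => False

namespace Stmt15Aux

set_option linter.unusedSectionVars false

lemma indep_subset {W : Type*} {G : SimpleGraph W} {S T : Finset W}
    (h : IsIndepSet G T) (hst : S ⊆ T) : IsIndepSet G S :=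
  fun _ hu _ hv => h (hst hu) (hst hv)

/-- The number of single-vertex extensions of an independent set. -/
noncomputable def extCount {W : Type*} [Fintype W] [DecidableEq W] (G : SimpleGraph W)
    (S : Finset W) : ℕ :=
  (Finset.univ.filter fun x => x ∉ S ∧ IsIndepSet G (insert x S)).card

/-- Double counting: pairs `(S, T)` of independent sets with `S ⊆ T`, `|S| = k`, `|T| = k+1`. -/
lemma sum_extCount {W : Type*} [Fintype W] [DecidableEq W] (G : SimpleGraph W) (k : ℕ) :
    (k+1) * indepCount G (k+1) =
      ∑ S ∈ Finset.univ.filter (fun S : Finset W => IsIndepSet G S ∧ S.card = k),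
        extCount G S := by
  set E : Finset (Finset W × W) := Finset.univ.filter
    (fun p : Finset W × W => (IsIndepSet G p.1 ∧ p.1.card = k) ∧ p.2 ∉ p.1 ∧
      IsIndepSet G (insert p.2 p.1)) with hE
  have h1 : E.card = ∑ S ∈ Finset.univ.filter
      (fun S : Finset W => IsIndepSet G S ∧ S.card = k), extCount G S := by
    rw [Finset.card_eq_sum_card_fiberwise (f := Prod.fst)
      (t := Finset.univ.filter (fun S : Finset W => IsIndepSet G S ∧ S.card = k))]
    · apply Finset.sum_congr rfl
      intro S hS
      rw [extCount]
      apply Finset.card_bij (fun p _ => p.2)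
      · intro p hp
        simp only [Finset.mem_filter, hE, Finset.mem_univ, true_and] at hp ⊢
        rcases hp with ⟨⟨_, h2⟩, h3⟩
        rw [h3] at h2
        exact h2
      · intro p hp q hq hpq
        simp only [Finset.mem_filter, hE] at hp hq
        exact Prod.ext (hp.2.trans hq.2.symm) hpq
      · intro x hx
        simp only [Finset.mem_filter, Finset.mem_univ, true_and] at hx
        simp only [Finset.mem_filter, Finset.mem_univ, true_and] at hS
        exact ⟨(S, x), by simp [hE, hS, hx], rfl⟩
    · intro p hp
      simp only [Finset.mem_coe, Finset.mem_filter, hE, Finset.mem_univ, true_and] at hp ⊢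
      exact hp.1
  have h2 : E.card = (k+1) * indepCount G (k+1) := by
    rw [Finset.card_eq_sum_card_fiberwise (f := fun p : Finset W × W => insert p.2 p.1)
      (t := Finset.univ.filter (fun S : Finset W => IsIndepSet G S ∧ S.card = k+1))]
    · have hfib : ∀ T ∈ Finset.univ.filter
          (fun S : Finset W => IsIndepSet G S ∧ S.card = k+1),
          (E.filter (fun p : Finset W × W => insert p.2 p.1 = T)).card = k+1 := by
        intro T hT
        simp only [Finset.mem_filter, Finset.mem_univ, true_and] at hT
        rw [← hT.2]
        apply Finset.card_bij' (fun p _ => p.2) (fun x _ => (T.erase x, x))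
        · intro p hp
          simp only [Finset.mem_filter, hE] at hp
          rw [← hp.2]
          exact Finset.mem_insert_self _ _
        · intro x hx
          simp only [Finset.mem_filter, hE, Finset.mem_univ, true_and]
          have hins : insert x (T.erase x) = T := Finset.insert_erase hx
          refine ⟨⟨⟨indep_subset hT.1 (Finset.erase_subset _ _), ?_⟩,
            Finset.notMem_erase _ _, by rw [hins]; exact hT.1⟩, hins⟩
          rw [Finset.card_erase_of_mem hx, hT.2]
          rfl
        · intro p hp
          simp only [Finset.mem_filter, hE, Finset.mem_univ, true_and] at hp
          obtain ⟨⟨-, hnm, -⟩, heq⟩ := hp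
          obtain ⟨p1, p2⟩ := p
          simp only at hnm heq ⊢
          rw [← heq, Finset.erase_insert hnm]
        · intro x hx
          rfl
      rw [Finset.sum_congr rfl hfib, Finset.sum_const, smul_eq_mul, indepCount, Nat.mul_comm]
    · intro p hp
      simp only [Finset.mem_coe, Finset.mem_filter, hE, Finset.mem_univ, true_and] at hp ⊢
      exact ⟨hp.2.2, by rw [Finset.card_insert_of_notMem hp.2.1, hp.1.2]⟩
  rw [← h2, h1]

/-- Base vertex of a corona vertex. -/
def base : V ⊕ V × Bool → V := Sum.elim id Prod.fst

lemma adj_of_base_eq (H : SimpleGraph V) {x y : V ⊕ V × Bool} (hne : x ≠ y)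
    (hb : base x = base y) : (corona2 H).Adj x y := by
  refine (SimpleGraph.fromRel_adj _ _ _).2 ⟨hne, ?_⟩
  rcases x with u | ⟨u, b⟩ <;> rcases y with v | ⟨v, c⟩ <;>
    simp only [base, Sum.elim_inl, Sum.elim_inr, id] at hb
  · exact absurd (congrArg Sum.inl hb) hne
  · exact Or.inl hb
  · exact Or.inr hb.symm
  · exact Or.inl hb

lemma base_eq_of_adj_inr (H : SimpleGraph V) {u : V} {b : Bool} {s : V ⊕ V × Bool}
    (h : (corona2 H).Adj (Sum.inr (u, b)) s) : base s = u := by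
  rw [corona2, SimpleGraph.fromRel_adj] at h
  rcases s with v | ⟨v, c⟩ <;>
    simp only [base, Sum.elim_inl, Sum.elim_inr, id]
  · rcases h.2 with h' | h'
    · exact h'.elim
    · exact h'
  · rcases h.2 with h' | h'
    · exact h'.symm
    · exact h'

lemma base_injOn (H : SimpleGraph V) {S : Finset (V ⊕ V × Bool)}
    (hS : IsIndepSet (corona2 H) S) :
    Set.InjOn base (S : Set (V ⊕ V × Bool)) := by
  intro x hx y hy hxy
  by_contra hne
  exact hS hx hy (adj_of_base_eq H hne hxy)

lemma card_image_base (H : SimpleGraph V) {S : Finset (V ⊕ V × Bool)}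
    (hS : IsIndepSet (corona2 H) S) : (S.image base).card = S.card :=
  Finset.card_image_of_injOn (base_injOn H hS)

variable [Fintype V]

/-- Tag for recovering a corona vertex from its base. -/
def tag : V ⊕ V × Bool → Option Bool := Sum.elim (fun _ => none) (fun p => some p.2)

lemma base_tag_inj {x y : V ⊕ V × Bool} (hb : base x = base y) (ht : tag x = tag y) :
    x = y := by
  rcases x with u | ⟨u, b⟩ <;> rcases y with v | ⟨v, c⟩ <;>
    simp_all [base, tag]

lemma extCount_le (H : SimpleGraph V) {S : Finset (V ⊕ V × Bool)}
    (hS : IsIndepSet (corona2 H) S) :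
    extCount (corona2 H) S ≤ 3 * (Fintype.card V - S.card) := by
  rw [extCount]
  refine le_trans (Finset.card_le_card_of_injOn
    (t := ((Finset.univ : Finset V) \ S.image base) ×ˢ (Finset.univ : Finset (Option Bool)))
    (fun x => (base x, tag x)) ?_ ?_) ?_
  · intro x hx
    simp only [Finset.mem_coe, Finset.mem_filter, Finset.mem_univ, true_and] at hx
    rw [Finset.mem_coe, Finset.mem_product]
    refine ⟨Finset.mem_sdiff.2 ⟨Finset.mem_univ _, ?_⟩, Finset.mem_univ _⟩
    intro hmem
    obtain ⟨s, hsS, hsx⟩ := Finset.mem_image.1 hmem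
    have hne : x ≠ s := fun h => hx.1 (h ▸ hsS)
    exact hx.2 (Finset.mem_insert_self x S) (Finset.mem_insert_of_mem hsS)
      (adj_of_base_eq H hne hsx.symm)
  · intro x _ y _ hxy
    exact base_tag_inj (congrArg Prod.fst hxy) (congrArg Prod.snd hxy)
  · rw [Finset.card_product, Finset.card_sdiff_of_subset (Finset.subset_univ _)]
    simp only [Finset.card_univ]
    have h3 : Fintype.card (Option Bool) = 3 := by simp
    rw [card_image_base H hS, h3, Nat.mul_comm]

lemma le_extCount (H : SimpleGraph V) {S : Finset (V ⊕ V × Bool)}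
    (hS : IsIndepSet (corona2 H) S) :
    2 * (Fintype.card V - S.card) ≤ extCount (corona2 H) S := by
  rw [extCount]
  refine le_trans ?_ (Finset.card_le_card_of_injOn
    (s := ((Finset.univ : Finset V) \ S.image base) ×ˢ (Finset.univ : Finset Bool))
    (fun p => Sum.inr (p.1, p.2)) ?_ ?_)
  pick_goal 2
  · intro p hp
    rw [Finset.mem_coe, Finset.mem_product] at hp
    have hp1 := Finset.mem_sdiff.1 hp.1
    have hnb : p.1 ∉ S.image base := hp1.2
    have hnotmem : (Sum.inr (p.1, p.2) : V ⊕ V × Bool) ∉ S := by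
      intro hmem
      exact hnb (Finset.mem_image.2 ⟨_, hmem, rfl⟩)
    simp only [Finset.mem_coe, Finset.mem_filter, Finset.mem_univ, true_and]
    refine ⟨hnotmem, ?_⟩
    intro a ha c hc hadj
    rcases Finset.mem_insert.1 ha with rfl | ha'
    · rcases Finset.mem_insert.1 hc with rfl | hc'
      · exact (corona2 H).irrefl hadj
      · exact hnb (Finset.mem_image.2 ⟨c, hc', base_eq_of_adj_inr H hadj⟩)
    · rcases Finset.mem_insert.1 hc with rfl | hc'
      · exact hnb (Finset.mem_image.2 ⟨a, ha', base_eq_of_adj_inr H hadj.symm⟩)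
      · exact hS ha' hc' hadj
  · rw [Finset.card_product, Finset.card_sdiff_of_subset (Finset.subset_univ _)]
    simp only [Finset.card_univ]
    rw [card_image_base H hS, Fintype.card_bool, Nat.mul_comm]
  · intro p _ q _ hpq
    have h' := Sum.inr.inj hpq
    exact Prod.ext (congrArg Prod.fst h') (congrArg Prod.snd h')

lemma indepNum_corona2 (H : SimpleGraph V) : indepNum (corona2 H) = Fintype.card V := by
  apply le_antisymm
  · apply Finset.sup_le
    intro S hS
    simp only [Finset.mem_filter, Finset.mem_univ, true_and] at hS
    rw [← card_image_base H hS]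
    exact le_trans (Finset.card_le_card (Finset.subset_univ _)) Finset.card_univ.le
  · have hmem : (Finset.univ.image fun v : V => (Sum.inr (v, false) : V ⊕ V × Bool)) ∈
        Finset.univ.filter fun S : Finset (V ⊕ V × Bool) => IsIndepSet (corona2 H) S := by
      simp only [Finset.mem_filter, Finset.mem_univ, true_and]
      intro a ha c hc hadj
      obtain ⟨u, -, rfl⟩ := Finset.mem_image.1 ha
      obtain ⟨v, -, rfl⟩ := Finset.mem_image.1 hc
      have hb := base_eq_of_adj_inr H hadj.symm
      simp only [base, Sum.elim_inr] at hb
      exact hadj.ne (by rw [hb])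
    have hcard : (Finset.univ.image fun v : V => (Sum.inr (v, false) : V ⊕ V × Bool)).card
        = Fintype.card V := by
      rw [Finset.card_image_of_injective _
        (fun a b h => congrArg Prod.fst (Sum.inr.inj h)), Finset.card_univ]
    calc Fintype.card V = _ := hcard.symm
      _ ≤ _ := Finset.le_sup hmem

/-- The two key counting inequalities between consecutive levels. -/
lemma level_bounds (H : SimpleGraph V) (k : ℕ) :
    (k+1) * indepCount (corona2 H) (k+1) ≤ 3 * (Fintype.card V - k) * indepCount (corona2 H) k
    ∧ 2 * (Fintype.card V - k) * indepCount (corona2 H) k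
        ≤ (k+1) * indepCount (corona2 H) (k+1) := by
  rw [sum_extCount (corona2 H) k]
  set F : Finset (Finset (V ⊕ V × Bool)) := Finset.univ.filter
    (fun S : Finset (V ⊕ V × Bool) => IsIndepSet (corona2 H) S ∧ S.card = k) with hF
  have hcard : F.card = indepCount (corona2 H) k := rfl
  have hmem : ∀ S ∈ F, IsIndepSet (corona2 H) S ∧ S.card = k := by
    intro S hS
    rw [hF, Finset.mem_filter] at hS
    exact hS.2
  constructor
  · calc ∑ S ∈ F, extCount (corona2 H) S
        ≤ F.card • (3 * (Fintype.card V - k)) := by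
          apply Finset.sum_le_card_nsmul
          intro S hS
          have h := extCount_le H (hmem S hS).1
          rwa [(hmem S hS).2] at h
      _ = 3 * (Fintype.card V - k) * indepCount (corona2 H) k := by
          rw [smul_eq_mul, hcard, Nat.mul_comm]
  · calc 2 * (Fintype.card V - k) * indepCount (corona2 H) k
        = F.card • (2 * (Fintype.card V - k)) := by
          rw [smul_eq_mul, hcard, Nat.mul_comm]
      _ ≤ ∑ S ∈ F, extCount (corona2 H) S := by
          apply Finset.card_nsmul_le_sum
          intro S hS
          have h := le_extCount H (hmem S hS).1
          rwa [(hmem S hS).2] at h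

end Stmt15Aux

/-- If `H` is a connected graph and `G = H ∘ K₂` with `α = α(G) ≥ 3`,
then `s_{α−3}·s_{α−1} ≤ s_{α−2}²` and `s_{α−2}·s_α ≤ s_{α−1}²`. -/
theorem stmt_15 {V : Type*} [Fintype V] (H : SimpleGraph V) (hconn : H.Connected)
    (G : SimpleGraph (V ⊕ V × Bool)) (hG : G = corona2 H)
    (alpha : ℕ) (ha : alpha = indepNum G) (ha3 : 3 ≤ alpha) :
    indepCount G (alpha - 3) * indepCount G (alpha - 1) ≤ indepCount G (alpha - 2) ^ 2 ∧
    indepCount G (alpha - 2) * indepCount G alpha ≤ indepCount G (alpha - 1) ^ 2 := by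
  subst hG
  rw [Stmt15Aux.indepNum_corona2 H] at ha
  obtain ⟨p, hp⟩ : ∃ p, alpha = p + 3 := ⟨alpha - 3, by omega⟩
  have hn : Fintype.card V = p + 3 := by omega
  subst hp
  set s : ℕ → ℕ := indepCount (corona2 H) with hs
  -- instantiate the level bounds at k = p, p+1, p+2
  have Bp := Stmt15Aux.level_bounds H (V := V) p
  have Bp1 := Stmt15Aux.level_bounds H (V := V) (p+1)
  have Bp2 := Stmt15Aux.level_bounds H (V := V) (p+2)
  rw [hn] at Bp Bp1 Bp2
  have e3 : p + 3 - p = 3 := by omega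
  have e2 : p + 3 - (p + 1) = 2 := by omega
  have e1 : p + 3 - (p + 2) = 1 := by omega
  rw [e3] at Bp
  rw [e2] at Bp1
  rw [e1] at Bp2
  -- (d): 6·s p ≤ (p+1)·s (p+1)
  have hd : 6 * s p ≤ (p + 1) * s (p + 1) := Bp.2
  -- (c'): (p+2)·s (p+2) ≤ 6·s (p+1)
  have hc : (p + 2) * s (p + 2) ≤ 6 * s (p + 1) := Bp1.1
  -- (b): 4·s (p+1) ≤ (p+2)·s (p+2)
  have hb : 4 * s (p + 1) ≤ (p + 2) * s (p + 2) := Bp1.2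
  -- (a'): (p+3)·s (p+3) ≤ 3·s (p+2)
  have ha' : (p + 3) * s (p + 3) ≤ 3 * s (p + 2) := by
    have := Bp2.1
    simpa using this
  have hidx0 : p + 3 - 3 = p := by omega
  have hidx1 : p + 3 - 1 = p + 2 := by omega
  have hidx2 : p + 3 - 2 = p + 1 := by omega
  rw [hidx0, hidx1, hidx2]
  constructor
  · -- s p * s (p+2) ≤ s (p+1)^2
    have key : (6 * s p) * ((p + 2) * s (p + 2)) ≤ ((p + 1) * s (p + 1)) * (6 * s (p + 1)) :=
      Nat.mul_le_mul hd hc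
    have key2 : (6 * (p + 2)) * (s p * s (p + 2)) ≤ (6 * (p + 2)) * (s (p + 1) ^ 2) := by
      calc (6 * (p + 2)) * (s p * s (p + 2))
          = (6 * s p) * ((p + 2) * s (p + 2)) := by ring
        _ ≤ ((p + 1) * s (p + 1)) * (6 * s (p + 1)) := key
        _ = (6 * (p + 1)) * (s (p + 1) ^ 2) := by ring
        _ ≤ (6 * (p + 2)) * (s (p + 1) ^ 2) :=
            Nat.mul_le_mul_right _ (by omega)
    exact Nat.le_of_mul_le_mul_left key2 (by omega)
  · -- s (p+1) * s (p+3) ≤ s (p+2)^2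
    have key : (4 * s (p + 1)) * ((p + 3) * s (p + 3)) ≤ ((p + 2) * s (p + 2)) * (3 * s (p + 2)) :=
      Nat.mul_le_mul hb ha'
    have key2 : (4 * (p + 3)) * (s (p + 1) * s (p + 3)) ≤ (4 * (p + 3)) * (s (p + 2) ^ 2) := by
      calc (4 * (p + 3)) * (s (p + 1) * s (p + 3))
          = (4 * s (p + 1)) * ((p + 3) * s (p + 3)) := by ring
        _ ≤ ((p + 2) * s (p + 2)) * (3 * s (p + 2)) := key
        _ = (3 * (p + 2)) * (s (p + 2) ^ 2) := by ring
        _ ≤ (4 * (p + 3)) * (s (p + 2) ^ 2) :=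
            Nat.mul_le_mul_right _ (by omega)
    exact Nat.le_of_mul_le_mul_left key2 (by omega)
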